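/- Let n be a natural number, let q, p : Fin n → ℂ with p injective (the p_i are pairwise distinct), and let g ∈ ℂ. Define the n×n complex matrix Q by Q i i = q i and Q i j = i·g/(p i − p j) for i ≠ j, where i is the imaginary unit. Then trace(Q³) = Σ_i (q i)³ + 3 g² Σ_{i<j} (q i + q j)/(p i − p j)². -/
import Mathlib

open Finset in
lemma pair_sum_aux {n : ℕ} (f : Fin n → Fin n → ℂ) (hdiag : ∀ i, f i i = 0) :
    ∑ i, ∑ j, f i j = ∑ i, ∑ j, (if i < j then f i j + f j i else 0) := by
  have step : ∀ i j : Fin n, f i j =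
      (if i < j then f i j else 0) + (if j < i then f i j else 0) := by
    intro i j
    rcases lt_trichotomy i j with h | h | h
    · simp [h, not_lt_of_gt h]
    · simp [h, hdiag]
    · simp [h, not_lt_of_gt h]
  calc ∑ i, ∑ j, f i j
      = ∑ i, ∑ j, ((if i < j then f i j else 0) + (if j < i then f i j else 0)) := by
        exact Finset.sum_congr rfl fun i _ => Finset.sum_congr rfl fun j _ => step i j
    _ = (∑ i, ∑ j, (if i < j then f i j else 0))
        + ∑ i, ∑ j, (if j < i then f i j else 0) := by
        rw [← Finset.sum_add_distrib]
        exact Finset.sum_congr rfl fun i _ => Finset.sum_add_distrib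
    _ = (∑ i, ∑ j, (if i < j then f i j else 0))
        + ∑ i, ∑ j, (if i < j then f j i else 0) := by
        congr 1
        exact Finset.sum_comm
    _ = ∑ i, ∑ j, (if i < j then f i j + f j i else 0) := by
        rw [← Finset.sum_add_distrib]
        refine Finset.sum_congr rfl fun i _ => ?_
        rw [← Finset.sum_add_distrib]
        refine Finset.sum_congr rfl fun j _ => ?_
        split_ifs <;> simp

/-- Appendix computation of `Tr Q³` for the dual-coordinate matrix `Q` with diagonal
entries `q i` and off-diagonal entries `I·g/(p i − p j)`. -/
theorem trace_Q_cubed (n : ℕ) (q p : Fin n → ℂ) (hp : Function.Injective p) (g : ℂ) :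
    Matrix.trace
        ((Matrix.of fun i j : Fin n =>
          if i = j then q i else Complex.I * g / (p i - p j)) ^ 3)
      = (∑ i, (q i) ^ 3)
        + 3 * g ^ 2 * ∑ i, ∑ j, if i < j then (q i + q j) / (p i - p j) ^ 2 else 0 := by
  set D : Matrix (Fin n) (Fin n) ℂ := Matrix.diagonal q with hD
  set A : Matrix (Fin n) (Fin n) ℂ :=
    Matrix.of (fun i j => if i = j then 0 else Complex.I * g / (p i - p j)) with hA
  have hQ : (Matrix.of fun i j : Fin n =>
      if i = j then q i else Complex.I * g / (p i - p j)) = D + A := by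
    ext i j
    by_cases h : i = j <;> simp [hD, hA, Matrix.diagonal_apply, h]
  rw [hQ]
  have hAdiag : ∀ i, A i i = 0 := fun i => by simp [hA]
  -- skew symmetry
  have hskew : Matrix.transpose A = -A := by
    ext i j
    by_cases h : i = j
    · simp [hA, h]
    · have h' : ¬ (j = i) := fun e => h e.symm
      simp only [hA, Matrix.transpose_apply, Matrix.neg_apply, Matrix.of_apply, if_neg h, if_neg h']
      rw [show p j - p i = -(p i - p j) by ring, div_neg]
  have hA3 : Matrix.trace (A * A * A) = 0 := by
    have h1 : Matrix.trace (A * A * A) = Matrix.trace (Matrix.transpose (A * A * A)) :=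
      (Matrix.trace_transpose _).symm
    rw [Matrix.transpose_mul, Matrix.transpose_mul, hskew] at h1
    rw [show (-A : Matrix (Fin n) (Fin n) ℂ) * (-A * -A) = -(A * A * A) by noncomm_ring,
      Matrix.trace_neg] at h1
    have h2 : Matrix.trace (A * A * A) + Matrix.trace (A * A * A) = 0 := by
      linear_combination h1
    exact add_self_eq_zero.mp h2
  -- product of symmetric off-diagonal entries
  have hprod : ∀ i j, A i j * A j i = g ^ 2 / (p i - p j) ^ 2 := by
    intro i j
    by_cases h : i = j
    · simp [hA, h]
    · have h' : ¬ (j = i) := fun e => h e.symm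
      simp only [hA, Matrix.of_apply, if_neg h, if_neg h']
      rw [show p j - p i = -(p i - p j) by ring, div_mul_div_comm,
        show Complex.I * g * (Complex.I * g) = -(g ^ 2) by
          rw [show Complex.I * g * (Complex.I * g) = Complex.I * Complex.I * (g * g) by ring,
            Complex.I_mul_I]; ring,
        mul_neg, neg_div_neg_eq, ← sq]
  -- traces of diagonal-heavy terms
  have tDDD : Matrix.trace (D * D * D) = ∑ i, (q i) ^ 3 := by
    simp [hD, Matrix.diagonal_mul_diagonal, Matrix.trace_diagonal]
    exact Finset.sum_congr rfl fun i _ => by ring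
  have tDDA : Matrix.trace (D * D * A) = 0 := by
    rw [show D * D = Matrix.diagonal (q * q) by simp [hD]]
    simp [Matrix.trace, Matrix.diag, Matrix.diagonal_mul, hAdiag]
  have tDAD : Matrix.trace (D * A * D) = 0 := by
    rw [Matrix.trace_mul_comm, ← mul_assoc]
    exact tDDA
  have tADD : Matrix.trace (A * D * D) = 0 := by
    rw [Matrix.trace_mul_comm, ← mul_assoc, Matrix.trace_mul_comm, ← mul_assoc]
    exact tDDA
  have tDAA : Matrix.trace (D * A * A) = ∑ i, ∑ j, q i * (g ^ 2 / (p i - p j) ^ 2) := by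
    rw [mul_assoc]
    rw [show Matrix.trace (D * (A * A)) = ∑ i, q i * (A * A) i i by
      simp [hD, Matrix.trace, Matrix.diag, Matrix.diagonal_mul]]
    refine Finset.sum_congr rfl fun i _ => ?_
    rw [Matrix.mul_apply, Finset.mul_sum]
    exact Finset.sum_congr rfl fun j _ => by rw [hprod]
  have tADA : Matrix.trace (A * D * A) = Matrix.trace (D * A * A) := by
    rw [Matrix.trace_mul_comm, ← mul_assoc, Matrix.trace_mul_comm, ← mul_assoc]
  have tAAD : Matrix.trace (A * A * D) = Matrix.trace (D * A * A) := by
    rw [Matrix.trace_mul_comm, ← mul_assoc]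
  have expand : (D + A) ^ 3 =
      D * D * D + (D * D * A + D * A * D + A * D * D)
        + (D * A * A + A * D * A + A * A * D) + A * A * A := by
    rw [pow_succ, pow_succ, pow_one]
    noncomm_ring
  have key : ∑ i, ∑ j, q i * (g ^ 2 / (p i - p j) ^ 2)
      = g ^ 2 * ∑ i, ∑ j, (if i < j then (q i + q j) / (p i - p j) ^ 2 else 0) := by
    rw [pair_sum_aux (fun i j => q i * (g ^ 2 / (p i - p j) ^ 2)) (fun i => by simp),
      Finset.mul_sum]
    refine Finset.sum_congr rfl fun i _ => ?_
    rw [Finset.mul_sum]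
    refine Finset.sum_congr rfl fun j _ => ?_
    split_ifs with h
    · rw [show (p j - p i) ^ 2 = (p i - p j) ^ 2 by ring]
      ring
    · simp
  rw [expand]
  simp only [Matrix.trace_add, tDDD, tDDA, tDAD, tADD, tDAA, tADA, tAAD, hA3, key]
  ring
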